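/- Let Δ be a flag simplicial complex and e = {a,b} an edge not contained in any induced 4-cycle of the 1-skeleton of Δ. Then the edge contraction Δ̃ obtained by identifying a and b is again a flag simplicial complex. -/
import Mathlib


open Polynomial Finset

variable {V : Type*} [DecidableEq V]

/-- A (finite, abstract) simplicial complex: contains the empty face and is
closed under taking subsets. -/
def IsSimpComplex (K : Finset (Finset V)) : Prop :=
  ∅ ∈ K ∧ ∀ A ∈ K, ∀ B ⊆ A, B ∈ K

/-- The link of a face `F`: all faces `A` with `A ∪ F ∈ K` and `A ∩ F = ∅`. -/
def lk (K : Finset (Finset V)) (F : Finset V) : Finset (Finset V) :=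
  K.filter fun A => A ∪ F ∈ K ∧ Disjoint A F

/-- The face polynomial `f_K(t) = ∑_{A ∈ K} t^{|A|}` (the empty face contributes 1). -/
noncomputable def fpoly (K : Finset (Finset V)) : Polynomial ℤ :=
  ∑ A ∈ K, Polynomial.X ^ A.card

/-- `∑_{A ∈ K} (t-1)^{d-|A|} = ∑_i f_{i-1}(K) (t-1)^{d-i} = ∑_k h_k(K) t^{d-k}`,
the (descending form of the) h-polynomial of a `(d-1)`-dimensional complex. -/
noncomputable def hpoly (d : ℕ) (K : Finset (Finset V)) : Polynomial ℤ :=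
  ∑ A ∈ K, (Polynomial.X - 1) ^ (d - A.card)

/-- `faceCount K i = f_{i-1}(K)`, the number of faces of cardinality `i`. -/
def faceCount (K : Finset (Finset V)) (i : ℕ) : ℕ :=
  (K.filter fun A => A.card = i).card

/-- A flag complex: every clique (set of pairwise adjacent vertices) is a face. -/
def IsFlag (K : Finset (Finset V)) : Prop :=
  ∀ A : Finset V, A.Nonempty → (∀ x ∈ A, ({x} : Finset V) ∈ K) →
    (∀ x ∈ A, ∀ y ∈ A, x ≠ y → ({x, y} : Finset V) ∈ K) → A ∈ K

/-- The edge `{a,b}` is admissible: it is contained in no induced 4-cycle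
`a - b - c - d - a` of the 1-skeleton. -/
def AdmissibleEdge (K : Finset (Finset V)) (a b : V) : Prop :=
  ¬ ∃ c d : V, ({a, b, c, d} : Finset V).card = 4 ∧
    ({b, c} : Finset V) ∈ K ∧ ({c, d} : Finset V) ∈ K ∧ ({d, a} : Finset V) ∈ K ∧
    ({a, c} : Finset V) ∉ K ∧ ({b, d} : Finset V) ∉ K

/-- The edge contraction identifying `b` with `a`. -/
def contractEdge (K : Finset (Finset V)) (a b : V) : Finset (Finset V) :=
  K.image fun A => if b ∈ A then insert a (A.erase b) else A

/-- Lutz–Nevo: contracting an admissible edge of a flag simplicial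
complex yields again a flag simplicial complex. -/
lemma mem_contract_iff {K : Finset (Finset V)} {a b : V} {C : Finset V} :
    C ∈ contractEdge K a b ↔
      ∃ F ∈ K, (if b ∈ F then insert a (F.erase b) else F) = C := by
  simp [contractEdge]

lemma b_notMem_contract {K : Finset (Finset V)} {a b : V} (hab : a ≠ b)
    {C : Finset V} (hC : C ∈ contractEdge K a b) : b ∉ C := by
  rcases mem_contract_iff.1 hC with ⟨F, hF, rfl⟩
  split_ifs with h
  · simp [Finset.mem_insert, hab.symm]
  · exact h

lemma lift_of_a_notMem {K : Finset (Finset V)} {a b : V}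
    {C : Finset V} (hC : C ∈ contractEdge K a b) (ha : a ∉ C) : C ∈ K := by
  rcases mem_contract_iff.1 hC with ⟨F, hF, rfl⟩
  split_ifs at ha ⊢ with h
  · exact absurd (Finset.mem_insert_self a _) ha
  · exact hF

lemma mem_contract_of_b_notMem {K : Finset (Finset V)} {a b : V}
    {F : Finset V} (hF : F ∈ K) (hb : b ∉ F) : F ∈ contractEdge K a b := by
  exact mem_contract_iff.2 ⟨F, hF, by simp [hb]⟩

lemma edge_lift {K : Finset (Finset V)} {a b : V} (hK : IsSimpComplex K)
    {s : V} (hsa : s ≠ a) (hsb : s ≠ b)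
    (hC : ({a, s} : Finset V) ∈ contractEdge K a b) :
    ({a, s} : Finset V) ∈ K ∨ ({b, s} : Finset V) ∈ K := by
  rcases mem_contract_iff.1 hC with ⟨F, hF, heq⟩
  split_ifs at heq with h
  · right
    have hsF : s ∈ F := by
      have : s ∈ insert a (F.erase b) := heq ▸ (by simp)
      rcases Finset.mem_insert.1 this with h' | h'
      · exact absurd h' hsa
      · exact Finset.mem_of_mem_erase h'
    refine hK.2 F hF _ ?_
    intro x hx
    rcases Finset.mem_insert.1 hx with rfl | hx
    · exact h
    · exact (Finset.mem_singleton.1 hx) ▸ hsF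
  · left; exact heq ▸ hF

theorem stmt13 (Δ : Finset (Finset V)) (a b : V)
    (hΔ : IsSimpComplex Δ) (hflag : IsFlag Δ) (hab : a ≠ b)
    (he : ({a, b} : Finset V) ∈ Δ) (hadm : AdmissibleEdge Δ a b) :
    IsSimpComplex (contractEdge Δ a b) ∧ IsFlag (contractEdge Δ a b) := by
  have ha1 : ({a} : Finset V) ∈ Δ := hΔ.2 _ he {a} (by simp)
  constructor
  · constructor
    · exact mem_contract_of_b_notMem hΔ.1 (by simp)
    · rintro C hC B hB
      rcases mem_contract_iff.1 hC with ⟨F, hF, heq⟩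
      split_ifs at heq with h
      · subst heq
        have hbB : b ∉ B := fun hbB => by
          rcases Finset.mem_insert.1 (hB hbB) with h' | h'
          · exact hab h'.symm
          · exact (Finset.mem_erase.1 h').1 rfl
        by_cases haB : a ∈ B
        · have hsub : insert b (B.erase a) ⊆ F := by
            intro x hx
            rcases Finset.mem_insert.1 hx with rfl | hx
            · exact h
            · have hxa := (Finset.mem_erase.1 hx).1
              have := hB (Finset.mem_erase.1 hx).2
              rcases Finset.mem_insert.1 this with h' | h'
              · exact absurd h' hxa
              · exact Finset.mem_of_mem_erase h'
          have hF' : insert b (B.erase a) ∈ Δ := hΔ.2 F hF _ hsub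
          refine mem_contract_iff.2 ⟨_, hF', ?_⟩
          rw [if_pos (Finset.mem_insert_self b _)]
          rw [Finset.erase_insert (by simp [hbB])]
          exact Finset.insert_erase haB
        · have hBΔ : B ∈ Δ := by
            refine hΔ.2 F hF B ?_
            intro x hx
            rcases Finset.mem_insert.1 (hB hx) with rfl | h'
            · exact absurd hx haB
            · exact Finset.mem_of_mem_erase h'
          exact mem_contract_of_b_notMem hBΔ hbB
      · subst heq
        have hbB : b ∉ B := fun hbB => h (hB hbB)
        exact mem_contract_of_b_notMem (hΔ.2 F hF B hB) hbB
  · intro A hA hvert hedge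
    have hbA : b ∉ A := fun hbA =>
      b_notMem_contract hab (hvert b hbA) (Finset.mem_singleton_self b)
    -- singletons of non-a,b vertices lift
    have hvΔ : ∀ x ∈ A, x ≠ a → ({x} : Finset V) ∈ Δ := by
      intro x hx hxa
      exact lift_of_a_notMem (hvert x hx) (by simp [Ne.symm hxa])
    have hedgeΔ : ∀ x ∈ A, ∀ y ∈ A, x ≠ y → x ≠ a → y ≠ a →
        ({x, y} : Finset V) ∈ Δ := by
      intro x hx y hy hxy hxa hya
      exact lift_of_a_notMem (hedge x hx y hy hxy)
        (by simp [Ne.symm hxa, Ne.symm hya])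
    by_cases haA : a ∈ A
    · -- S = A.erase a
      set S := A.erase a with hS
      have hSprop : ∀ s ∈ S, ({a, s} : Finset V) ∈ Δ ∨ ({b, s} : Finset V) ∈ Δ := by
        intro s hs
        have hsa := (Finset.mem_erase.1 hs).1
        have hsA := (Finset.mem_erase.1 hs).2
        have hsb : s ≠ b := fun h => hbA (h ▸ hsA)
        exact edge_lift hΔ hsa hsb (hedge a haA s hsA (Ne.symm hsa))
      by_cases hall : ∀ s ∈ S, ({a, s} : Finset V) ∈ Δ
      · -- A is a clique in Δ
        have hAΔ : A ∈ Δ := by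
          refine hflag A hA ?_ ?_
          · intro x hx
            by_cases hxa : x = a
            · exact hxa ▸ ha1
            · exact hvΔ x hx hxa
          · intro x hx y hy hxy
            by_cases hxa : x = a
            · subst hxa
              exact hall y (Finset.mem_erase.2 ⟨Ne.symm hxy, hy⟩)
            · by_cases hya : y = a
              · subst hya
                rw [Finset.pair_comm]
                exact hall x (Finset.mem_erase.2 ⟨hxa, hx⟩)
              · exact hedgeΔ x hx y hy hxy hxa hya
        exact mem_contract_of_b_notMem hAΔ hbA
      · push_neg at hall
        obtain ⟨s, hsS, hsΔ⟩ := hall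
        have hbs : ({b, s} : Finset V) ∈ Δ := (hSprop s hsS).resolve_left hsΔ
        by_cases hallb : ∀ t ∈ S, ({b, t} : Finset V) ∈ Δ
        · -- insert b S is a clique in Δ
          have hsa : ∀ t ∈ S, t ≠ a := fun t ht => (Finset.mem_erase.1 ht).1
          have hsbne : ∀ t ∈ S, t ≠ b := fun t ht h =>
            hbA (h ▸ (Finset.mem_erase.1 ht).2)
          have hBΔ : insert b S ∈ Δ := by
            refine hflag _ ⟨b, Finset.mem_insert_self b S⟩ ?_ ?_
            · intro x hx
              rcases Finset.mem_insert.1 hx with rfl | hx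
              · exact hΔ.2 _ he {x} (by simp)
              · exact hvΔ x (Finset.mem_erase.1 hx).2 (hsa x hx)
            · intro x hx y hy hxy
              rcases Finset.mem_insert.1 hx with hx' | hx'
              · subst hx'
                rcases Finset.mem_insert.1 hy with hy' | hy'
                · exact absurd hy'.symm hxy
                · exact hallb y hy'
              · rcases Finset.mem_insert.1 hy with hy' | hy'
                · subst hy'
                  rw [Finset.pair_comm]; exact hallb x hx'
                · exact hedgeΔ x (Finset.mem_erase.1 hx').2 y
                    (Finset.mem_erase.1 hy').2 hxy (hsa x hx') (hsa y hy')
          refine mem_contract_iff.2 ⟨insert b S, hBΔ, ?_⟩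
          rw [if_pos (Finset.mem_insert_self b S)]
          rw [Finset.erase_insert (fun h => hsbne b h rfl)]
          exact Finset.insert_erase haA
        · push_neg at hallb
          obtain ⟨t, htS, htΔ⟩ := hallb
          have hat : ({a, t} : Finset V) ∈ Δ := (hSprop t htS).resolve_right htΔ
          -- s ≠ t, {s,t} ∈ Δ, induced 4-cycle a b s t
          have hst : s ≠ t := fun h => htΔ (h ▸ hbs)
          have hsa := (Finset.mem_erase.1 hsS).1
          have hta := (Finset.mem_erase.1 htS).1
          have hsb : s ≠ b := fun h => hbA (h ▸ (Finset.mem_erase.1 hsS).2)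
          have htb : t ≠ b := fun h => hbA (h ▸ (Finset.mem_erase.1 htS).2)
          have hstΔ : ({s, t} : Finset V) ∈ Δ :=
            hedgeΔ s (Finset.mem_erase.1 hsS).2 t (Finset.mem_erase.1 htS).2
              hst hsa hta
          have hcard : ({a, b, s, t} : Finset V).card = 4 := by
            rw [Finset.card_insert_of_notMem
                (by simp [hab, Ne.symm hsa, Ne.symm hta]),
              Finset.card_insert_of_notMem (by simp [Ne.symm hsb, Ne.symm htb]),
              Finset.card_insert_of_notMem (by simp [hst]),
              Finset.card_singleton]
          exact absurd ⟨s, t, hcard, hbs, hstΔ,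
            by rw [Finset.pair_comm]; exact hat, hsΔ, htΔ⟩ hadm
    · -- a ∉ A : lift the whole clique
      have hAΔ : A ∈ Δ := by
        refine hflag A hA ?_ ?_
        · intro x hx
          exact hvΔ x hx (fun h => haA (h ▸ hx))
        · intro x hx y hy hxy
          exact hedgeΔ x hx y hy hxy (fun h => haA (h ▸ hx))
            (fun h => haA (h ▸ hy))
      exact mem_contract_of_b_notMem hAΔ hbA
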